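/- With the setup below, define B_G = (1/(r² n_d)) Σ_{d∈{0,…,r−1}²} Σ_{j=1}^{n_d} ( exp(i q_γ·b_{dj}) − E[exp(i q_γ·b_{dj})] ). If moreover ε ≤ 1/(πr) and q_γ ≠ 0, then for every c > 0, P( |B_G| ≥ √2 ( c‖q_γ‖₁ ε + ‖q_γ‖₁³ ε_r³ / 3 ) ) ≤ 4 exp( − c² n_d / 8 ). -/

import Mathlib

open MeasureTheory ProbabilityTheory

/-- The ℓ¹ norm on ℝ². -/
def srL1 (q : ℝ × ℝ) : ℝ := |q.1| + |q.2|

/-- The Euclidean (ℓ²) norm on ℝ². -/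
noncomputable def srL2 (q : ℝ × ℝ) : ℝ := Real.sqrt (q.1 ^ 2 + q.2 ^ 2)

/-- `f(q, εr) = ‖q‖₁² εr²/2 + ‖q‖₁³ εr³/6`. -/
noncomputable def srF (q : ℝ × ℝ) (εr : ℝ) : ℝ :=
  srL1 q ^ 2 * εr ^ 2 / 2 + srL1 q ^ 3 * εr ^ 3 / 6

/-- The centered fluctuation term
`B_G = (1/(r² n_d)) Σ_d Σ_j (exp(i q·b_{dj}) − E[exp(i q·b_{dj})])`. -/
noncomputable def srBG {Ω : Type*} [MeasureSpace Ω] (r nd : ℕ)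
    (b : Fin r × Fin r → Fin nd → Ω → ℝ × ℝ) (q : ℝ × ℝ) (ω : Ω) : ℂ :=
  ((r : ℂ) ^ 2 * (nd : ℂ))⁻¹ * ∑ d : Fin r × Fin r, ∑ j : Fin nd,
    (Complex.exp (Complex.I * ((q.1 * (b d j ω).1 + q.2 * (b d j ω).2 : ℝ) : ℂ))
      - ∫ ω', Complex.exp (Complex.I * ((q.1 * (b d j ω').1 + q.2 * (b d j ω').2 : ℝ) : ℂ)))

/-- The coefficient `G_α(k') = (1/(r² n_d)) Σ_d Σ_j exp(−i θ_{αd}) exp(i q_α·b_{dj})`,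
parametrized by `δ = α − γ` (so that `θ_{αd} = (2π/r) δ·d`) and `q = q_α`. -/
noncomputable def srG {Ω : Type*} (r nd : ℕ)
    (b : Fin r × Fin r → Fin nd → Ω → ℝ × ℝ) (δ : ℤ × ℤ) (q : ℝ × ℝ) (ω : Ω) : ℂ :=
  ((r : ℂ) ^ 2 * (nd : ℂ))⁻¹ * ∑ d : Fin r × Fin r, ∑ j : Fin nd,
    Complex.exp (-Complex.I *
        ((2 * Real.pi / (r : ℝ) *
          ((δ.1 * ((d.1 : ℕ) : ℤ) + δ.2 * ((d.2 : ℕ) : ℤ) : ℤ) : ℝ) : ℝ) : ℂ))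
      * Complex.exp (Complex.I * ((q.1 * (b d j ω).1 + q.2 * (b d j ω).2 : ℝ) : ℂ))

lemma sr_cos_lip (x y : ℝ) : |Real.cos x - Real.cos y| ≤ |x - y| := by
  rw [Real.cos_sub_cos]
  have hA := Real.abs_sin_le_one ((x + y) / 2)
  have hB : |Real.sin ((x - y) / 2)| ≤ |x - y| / 2 := by
    have h := Real.abs_sin_le_abs (x := (x - y) / 2)
    rwa [abs_div, abs_two] at h
  have hE : |(-2) * Real.sin ((x + y) / 2) * Real.sin ((x - y) / 2)|
      = 2 * |Real.sin ((x + y) / 2)| * |Real.sin ((x - y) / 2)| := by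
    rw [abs_mul, abs_mul]; norm_num
  rw [hE]
  nlinarith [abs_nonneg (Real.sin ((x + y) / 2)), abs_nonneg (Real.sin ((x - y) / 2))]

lemma sr_sin_lip (x y : ℝ) : |Real.sin x - Real.sin y| ≤ |x - y| := by
  rw [Real.sin_sub_sin]
  have hA := Real.abs_cos_le_one ((x + y) / 2)
  have hB : |Real.sin ((x - y) / 2)| ≤ |x - y| / 2 := by
    have h := Real.abs_sin_le_abs (x := (x - y) / 2)
    rwa [abs_div, abs_two] at h
  have hE : |2 * Real.sin ((x - y) / 2) * Real.cos ((x + y) / 2)|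
      = 2 * |Real.sin ((x - y) / 2)| * |Real.cos ((x + y) / 2)| := by
    rw [abs_mul, abs_mul]; norm_num
  rw [hE]
  nlinarith [mul_le_mul hB hA (abs_nonneg _) (by positivity : (0:ℝ) ≤ |x - y| / 2)]

lemma sr_four_cases (u R I : ℝ) (h : 2 * u ^ 2 ≤ R ^ 2 + I ^ 2) :
    u ≤ R ∨ u ≤ -R ∨ u ≤ I ∨ u ≤ -I := by
  by_contra h'
  push_neg at h'
  obtain ⟨h1, h2, h3, h4⟩ := h'
  nlinarith [mul_pos (sub_pos.2 h1) (sub_pos.2 h2), mul_pos (sub_pos.2 h3) (sub_pos.2 h4)]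

lemma sr_mgf_le {Ω : Type*} [MeasureSpace Ω] [IsProbabilityMeasure (ℙ : Measure Ω)]
    (Z : Ω → ℝ) (hZm : Measurable Z) (M t : ℝ) (hM : 0 < M)
    (hbd : ∀ ω, |Z ω| ≤ M) (hmean : (∫ ω, Z ω) = 0) :
    mgf Z ℙ t ≤ Real.exp (t ^ 2 * M ^ 2 / 2) := by
  have hZint : Integrable Z := by
    refine (integrable_const M).mono' hZm.aestronglyMeasurable ?_
    exact Filter.Eventually.of_forall fun ω => by simpa using hbd ω
  have hle : ∀ ω, Real.exp (t * Z ω) ≤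
      Real.cosh (t * M) + Z ω * (Real.sinh (t * M) / M) := by
    intro ω
    set z := Z ω with hz
    obtain ⟨h1, h2⟩ := abs_le.1 (hbd ω)
    have ha : (0:ℝ) ≤ (M - z) / (2 * M) := div_nonneg (by linarith) (by linarith)
    have hb : (0:ℝ) ≤ (M + z) / (2 * M) := div_nonneg (by linarith) (by linarith)
    have hab : (M - z) / (2 * M) + (M + z) / (2 * M) = 1 := by
      field_simp; ring
    have key := convexOn_exp.2 (Set.mem_univ (t * (-M))) (Set.mem_univ (t * M)) ha hb hab
    simp only [smul_eq_mul] at key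
    have harg : (M - z) / (2 * M) * (t * (-M)) + (M + z) / (2 * M) * (t * M) = t * z := by
      field_simp; ring
    rw [harg] at key
    refine key.trans (le_of_eq ?_)
    rw [Real.cosh_eq, Real.sinh_eq, mul_neg, Real.exp_neg]
    have hexp : Real.exp (t * M) ≠ 0 := Real.exp_ne_zero _
    field_simp
    ring
  have hint2 : Integrable (fun ω => Real.cosh (t * M) + Z ω * (Real.sinh (t * M) / M)) := by
    exact (integrable_const _).add (hZint.mul_const _)
  have hint1 : Integrable (fun ω => Real.exp (t * Z ω)) := by
    refine (integrable_const (Real.exp (|t| * M))).mono'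
      ((hZm.const_mul t).exp).aestronglyMeasurable ?_
    refine Filter.Eventually.of_forall fun ω => ?_
    rw [Real.norm_eq_abs, abs_of_pos (Real.exp_pos _), Real.exp_le_exp]
    calc t * Z ω ≤ |t * Z ω| := le_abs_self _
      _ = |t| * |Z ω| := abs_mul _ _
      _ ≤ |t| * M := by
          exact mul_le_mul_of_nonneg_left (hbd ω) (abs_nonneg t)
  calc mgf Z ℙ t = ∫ ω, Real.exp (t * Z ω) := rfl
    _ ≤ ∫ ω, (Real.cosh (t * M) + Z ω * (Real.sinh (t * M) / M)) :=
        integral_mono hint1 hint2 hle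
    _ = Real.cosh (t * M) := by
        rw [integral_add (integrable_const _) (hZint.mul_const _), integral_const,
          integral_mul_const, hmean]
        simp
    _ ≤ Real.exp ((t * M) ^ 2 / 2) := Real.cosh_le_exp_half_sq _
    _ = Real.exp (t ^ 2 * M ^ 2 / 2) := by rw [mul_pow]

lemma sr_dev_le {Ω : Type*} [MeasureSpace Ω] [IsProbabilityMeasure (ℙ : Measure Ω)]
    (Y : Ω → ℝ) (hm : Measurable Y) (M : ℝ)
    (h : ∀ ω ω', |Y ω - Y ω'| ≤ M) (ω : Ω) : |Y ω - ∫ ω', Y ω'| ≤ M := by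
  have hne : Nonempty Ω := by
    by_contra hne
    rw [not_nonempty_iff] at hne
    have h1 : (ℙ : Measure Ω) Set.univ = 1 := measure_univ
    rw [Set.eq_empty_of_isEmpty (Set.univ : Set Ω), measure_empty] at h1
    exact zero_ne_one h1
  obtain ⟨ω₀⟩ := hne
  have hint : Integrable Y := by
    refine (integrable_const (|Y ω₀| + M)).mono' hm.aestronglyMeasurable ?_
    refine Filter.Eventually.of_forall fun ω' => ?_
    rw [Real.norm_eq_abs]
    have := h ω' ω₀
    have := abs_sub_abs_le_abs_sub (Y ω') (Y ω₀)
    linarith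
  have hub : (∫ ω', Y ω') ≤ Y ω + M := by
    calc (∫ ω', Y ω') ≤ ∫ _, (Y ω + M) :=
          integral_mono hint (integrable_const _) (fun ω' => by
            have := abs_le.1 (h ω ω'); linarith)
      _ = Y ω + M := by simp
  have hlb : Y ω - M ≤ ∫ ω', Y ω' := by
    calc Y ω - M = ∫ _, (Y ω - M) := by simp
      _ ≤ ∫ ω', Y ω' :=
          integral_mono (integrable_const _) hint (fun ω' => by
            have := abs_le.1 (h ω ω'); linarith)
  exact abs_le.2 ⟨by linarith, by linarith⟩

lemma sr_hoeffding {Ω : Type*} [MeasureSpace Ω] [IsProbabilityMeasure (ℙ : Measure Ω)]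
    {ι : Type*} [Fintype ι] (Y : ι → Ω → ℝ) (hYm : ∀ i, Measurable (Y i))
    (hindep : iIndepFun Y ℙ)
    (M s : ℝ) (hM : 0 < M) (hs : 0 ≤ s)
    (hbd : ∀ i ω, |Y i ω - ∫ ω', Y i ω'| ≤ M) :
    (ℙ {ω | (Fintype.card ι : ℝ) * s ≤ ∑ i, (Y i ω - ∫ ω', Y i ω')}).toReal
      ≤ Real.exp (-(Fintype.card ι : ℝ) * s ^ 2 / (2 * M ^ 2)) := by
  set Z : ι → Ω → ℝ := fun i ω => Y i ω - ∫ ω', Y i ω' with hZ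
  have hZm : ∀ i, Measurable (Z i) := fun i => (hYm i).sub measurable_const
  have hZindep : iIndepFun Z ℙ := by
    exact hindep.comp (fun i x => x - ∫ ω', Y i ω')
      (fun i => measurable_id.sub measurable_const)
  have hYint : ∀ i, Integrable (Y i) := by
    intro i
    refine (integrable_const (|∫ ω', Y i ω'| + M)).mono' (hYm i).aestronglyMeasurable ?_
    refine Filter.Eventually.of_forall fun ω => ?_
    rw [Real.norm_eq_abs]
    have h1 := abs_le.1 (hbd i ω)
    have h2 := le_abs_self (∫ ω', Y i ω')
    have h3 := neg_abs_le (∫ ω', Y i ω')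
    rw [abs_le]
    constructor <;> linarith [h1.1, h1.2]
  have hZmean : ∀ i, (∫ ω, Z i ω) = 0 := by
    intro i
    simp only [hZ]
    rw [integral_sub (hYint i) (integrable_const _), integral_const]
    simp
  set t : ℝ := s / M ^ 2 with ht
  have ht0 : 0 ≤ t := div_nonneg hs (by positivity)
  have hexpint : ∀ i, Integrable (fun ω => Real.exp (t * Z i ω)) := by
    intro i
    refine (integrable_const (Real.exp (|t| * M))).mono'
      (((hZm i).const_mul t).exp).aestronglyMeasurable ?_
    refine Filter.Eventually.of_forall fun ω => ?_
    rw [Real.norm_eq_abs, abs_of_pos (Real.exp_pos _), Real.exp_le_exp]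
    calc t * Z i ω ≤ |t * Z i ω| := le_abs_self _
      _ = |t| * |Z i ω| := abs_mul _ _
      _ ≤ |t| * M := mul_le_mul_of_nonneg_left (hbd i ω) (abs_nonneg t)
  have hXint : Integrable (fun ω => Real.exp (t * (∑ i, Z i) ω)) :=
    hZindep.integrable_exp_mul_sum hZm (fun i _ => hexpint i)
  have hchern := measure_ge_le_exp_mul_mgf (X := ∑ i, Z i) (μ := ℙ)
    ((Fintype.card ι : ℝ) * s) ht0 hXint
  have hset : {ω | (Fintype.card ι : ℝ) * s ≤ (∑ i, Z i) ω}
      = {ω | (Fintype.card ι : ℝ) * s ≤ ∑ i, (Y i ω - ∫ ω', Y i ω')} := by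
    ext ω; simp [hZ, Finset.sum_apply]
  rw [hset] at hchern
  refine hchern.trans ?_
  have hmgf : mgf (∑ i, Z i) ℙ t ≤ Real.exp ((Fintype.card ι : ℝ) * (t ^ 2 * M ^ 2 / 2)) := by
    rw [hZindep.mgf_sum hZm]
    calc ∏ i, mgf (Z i) ℙ t ≤ ∏ _i : ι, Real.exp (t ^ 2 * M ^ 2 / 2) := by
          refine Finset.prod_le_prod (fun i _ => mgf_nonneg) (fun i _ => ?_)
          exact sr_mgf_le (Z i) (hZm i) M t hM (hbd i) (hZmean i)
      _ = Real.exp ((Fintype.card ι : ℝ) * (t ^ 2 * M ^ 2 / 2)) := by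
          rw [Finset.prod_const, ← Real.exp_nat_mul]
          simp [Finset.card_univ]
  calc Real.exp (-t * ((Fintype.card ι : ℝ) * s)) * mgf (∑ i, Z i) ℙ t
      ≤ Real.exp (-t * ((Fintype.card ι : ℝ) * s)) *
        Real.exp ((Fintype.card ι : ℝ) * (t ^ 2 * M ^ 2 / 2)) := by
        exact mul_le_mul_of_nonneg_left hmgf (le_of_lt (Real.exp_pos _))
    _ = Real.exp (-(Fintype.card ι : ℝ) * s ^ 2 / (2 * M ^ 2)) := by
        rw [← Real.exp_add]
        congr 1
        rw [ht]
        field_simp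
        ring

/-- Concentration inequality (28) for the modulus of `B_G`. -/
theorem stmt_6
    {Ω : Type*} [MeasureSpace Ω] [IsProbabilityMeasure (ℙ : Measure Ω)]
    (r N nd : ℕ) (hr : 2 ≤ r) (hN : 1 ≤ N) (hnd : 1 ≤ nd)
    (ε εr : ℝ) (hε : 0 < ε) (hεr : εr = ε * r)
    (b : Fin r × Fin r → Fin nd → Ω → ℝ × ℝ)
    (hbmeas : ∀ d j, Measurable (b d j))
    (hbdd : ∀ d j ω, |(b d j ω).1| ≤ εr ∧ |(b d j ω).2| ≤ εr)
    (hindep : iIndepFun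
      (fun p : (Fin r × Fin r) × Fin nd => b p.1 p.2) ℙ)
    (k' k γ : ℤ × ℤ)
    (hk'γ : k' = (k.1 + γ.1 * N, k.2 + γ.2 * N))
    (hk'HR : -(r * N : ℤ) ≤ 2 * k'.1 ∧ 2 * k'.1 < r * N ∧
             -(r * N : ℤ) ≤ 2 * k'.2 ∧ 2 * k'.2 < r * N)
    (hkLR : -(N : ℤ) ≤ 2 * k.1 ∧ 2 * k.1 < N ∧ -(N : ℤ) ≤ 2 * k.2 ∧ 2 * k.2 < N)
    (qγ : ℝ × ℝ)
    (hqγ : qγ = (2 * Real.pi * (k'.1 : ℝ) / ((r : ℝ) * N),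
                 2 * Real.pi * (k'.2 : ℝ) / ((r : ℝ) * N)))
    (hεπ : ε ≤ 1 / (Real.pi * r)) (hq0 : qγ ≠ 0) (c : ℝ) (hc : 0 < c) :
    (ℙ {ω | Real.sqrt 2 * (c * srL1 qγ * ε + srL1 qγ ^ 3 * εr ^ 3 / 3)
        ≤ ‖srBG r nd b qγ ω‖}).toReal
      ≤ 4 * Real.exp (-(c ^ 2 * nd) / 8) := by
  classical
  set ι := (Fin r × Fin r) × Fin nd with hι
  set θ : ι → Ω → ℝ := fun p ω => qγ.1 * (b p.1 p.2 ω).1 + qγ.2 * (b p.1 p.2 ω).2 with hθ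
  have hθm : ∀ p, Measurable (θ p) := fun p =>
    ((measurable_fst.comp (hbmeas p.1 p.2)).const_mul qγ.1).add
      ((measurable_snd.comp (hbmeas p.1 p.2)).const_mul qγ.2)
  -- positivity facts
  set a : ℝ := srL1 qγ with haa
  have ha : 0 < a := by
    rw [haa, srL1]
    by_contra h
    push_neg at h
    have h1 : qγ.1 = 0 := abs_eq_zero.1 (le_antisymm (by linarith [abs_nonneg qγ.2]) (abs_nonneg _))
    have h2 : qγ.2 = 0 := abs_eq_zero.1 (le_antisymm (by linarith [abs_nonneg qγ.1]) (abs_nonneg _))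
    exact hq0 (Prod.ext h1 h2)
  have hrpos : (0:ℝ) < r := by
    have : 0 < r := by omega
    exact_mod_cast this
  have hεr0 : 0 < εr := by rw [hεr]; positivity
  set M : ℝ := 2 * a * εr with hMdef
  have hM : 0 < M := by positivity
  -- pairwise bound for θ
  have hθbd : ∀ p (ω ω' : Ω), |θ p ω - θ p ω'| ≤ M := by
    intro p ω ω'
    have hb1 := (hbdd p.1 p.2 ω).1
    have hb2 := (hbdd p.1 p.2 ω).2
    have hb1' := (hbdd p.1 p.2 ω').1
    have hb2' := (hbdd p.1 p.2 ω').2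
    have heq : θ p ω - θ p ω' = qγ.1 * ((b p.1 p.2 ω).1 - (b p.1 p.2 ω').1)
        + qγ.2 * ((b p.1 p.2 ω).2 - (b p.1 p.2 ω').2) := by rw [hθ]; ring
    rw [heq]
    calc |qγ.1 * ((b p.1 p.2 ω).1 - (b p.1 p.2 ω').1)
          + qγ.2 * ((b p.1 p.2 ω).2 - (b p.1 p.2 ω').2)|
        ≤ |qγ.1 * ((b p.1 p.2 ω).1 - (b p.1 p.2 ω').1)|
          + |qγ.2 * ((b p.1 p.2 ω).2 - (b p.1 p.2 ω').2)| := abs_add_le _ _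
      _ = |qγ.1| * |(b p.1 p.2 ω).1 - (b p.1 p.2 ω').1|
          + |qγ.2| * |(b p.1 p.2 ω).2 - (b p.1 p.2 ω').2| := by rw [abs_mul, abs_mul]
      _ ≤ |qγ.1| * (2 * εr) + |qγ.2| * (2 * εr) := by
          gcongr
          · exact (abs_sub _ _).trans (by linarith)
          · exact (abs_sub _ _).trans (by linarith)
      _ = M := by rw [hMdef, haa, srL1]; ring
  -- the four variable families
  set Y1 : ι → Ω → ℝ := fun p ω => Real.cos (θ p ω) with hY1
  set Y2 : ι → Ω → ℝ := fun p ω => -Real.cos (θ p ω) with hY2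
  set Y3 : ι → Ω → ℝ := fun p ω => Real.sin (θ p ω) with hY3
  set Y4 : ι → Ω → ℝ := fun p ω => -Real.sin (θ p ω) with hY4
  have hY1m : ∀ p, Measurable (Y1 p) := fun p => (Real.measurable_cos).comp (hθm p)
  have hY2m : ∀ p, Measurable (Y2 p) := fun p => (hY1m p).neg
  have hY3m : ∀ p, Measurable (Y3 p) := fun p => (Real.measurable_sin).comp (hθm p)
  have hY4m : ∀ p, Measurable (Y4 p) := fun p => (hY3m p).neg
  -- independence
  have hind1 : iIndepFun Y1 ℙ :=
    hindep.comp (fun p (x : ℝ × ℝ) => Real.cos (qγ.1 * x.1 + qγ.2 * x.2))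
      (fun p => Real.measurable_cos.comp
        ((measurable_fst.const_mul qγ.1).add (measurable_snd.const_mul qγ.2)))
  have hind2 : iIndepFun Y2 ℙ :=
    hindep.comp (fun p (x : ℝ × ℝ) => -Real.cos (qγ.1 * x.1 + qγ.2 * x.2))
      (fun p => (Real.measurable_cos.comp
        ((measurable_fst.const_mul qγ.1).add (measurable_snd.const_mul qγ.2))).neg)
  have hind3 : iIndepFun Y3 ℙ :=
    hindep.comp (fun p (x : ℝ × ℝ) => Real.sin (qγ.1 * x.1 + qγ.2 * x.2))
      (fun p => Real.measurable_sin.comp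
        ((measurable_fst.const_mul qγ.1).add (measurable_snd.const_mul qγ.2)))
  have hind4 : iIndepFun Y4 ℙ :=
    hindep.comp (fun p (x : ℝ × ℝ) => -Real.sin (qγ.1 * x.1 + qγ.2 * x.2))
      (fun p => (Real.measurable_sin.comp
        ((measurable_fst.const_mul qγ.1).add (measurable_snd.const_mul qγ.2))).neg)
  -- deviation bounds
  have hcospair : ∀ p (ω ω' : Ω), |Real.cos (θ p ω) - Real.cos (θ p ω')| ≤ M :=
    fun p ω ω' => (sr_cos_lip _ _).trans (hθbd p ω ω')
  have hsinpair : ∀ p (ω ω' : Ω), |Real.sin (θ p ω) - Real.sin (θ p ω')| ≤ M :=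
    fun p ω ω' => (sr_sin_lip _ _).trans (hθbd p ω ω')
  have hbd1 : ∀ p ω, |Y1 p ω - ∫ ω', Y1 p ω'| ≤ M := fun p ω =>
    sr_dev_le (Y1 p) (hY1m p) M (hcospair p) ω
  have hbd2 : ∀ p ω, |Y2 p ω - ∫ ω', Y2 p ω'| ≤ M := fun p ω =>
    sr_dev_le (Y2 p) (hY2m p) M (fun ω ω' => by
      simpa [hY2, neg_add_eq_sub] using hcospair p ω' ω) ω
  have hbd3 : ∀ p ω, |Y3 p ω - ∫ ω', Y3 p ω'| ≤ M := fun p ω =>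
    sr_dev_le (Y3 p) (hY3m p) M (hsinpair p) ω
  have hbd4 : ∀ p ω, |Y4 p ω - ∫ ω', Y4 p ω'| ≤ M := fun p ω =>
    sr_dev_le (Y4 p) (hY4m p) M (fun ω ω' => by
      simpa [hY4, neg_add_eq_sub] using hsinpair p ω' ω) ω
  -- threshold
  set u : ℝ := c * srL1 qγ * ε + srL1 qγ ^ 3 * εr ^ 3 / 3 with hu
  have hu1 : c * a * ε ≤ u := by
    rw [hu, haa]
    have : 0 ≤ srL1 qγ ^ 3 * εr ^ 3 / 3 := by positivity
    linarith
  have hu0 : 0 ≤ u := le_trans (by positivity) hu1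
  -- Hoeffding applications
  have H1 := sr_hoeffding Y1 hY1m hind1 M u hM hu0 hbd1
  have H2 := sr_hoeffding Y2 hY2m hind2 M u hM hu0 hbd2
  have H3 := sr_hoeffding Y3 hY3m hind3 M u hM hu0 hbd3
  have H4 := sr_hoeffding Y4 hY4m hind4 M u hM hu0 hbd4
  have hcard : (Fintype.card ι : ℝ) = (r:ℝ)^2 * nd := by
    have h : Fintype.card ι = r * r * nd := by simp [hι]
    rw [h]; push_cast; ring
  -- bound the exponential
  have hE0 : Real.exp (-(Fintype.card ι : ℝ) * u ^ 2 / (2 * M ^ 2))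
      ≤ Real.exp (-(c ^ 2 * nd) / 8) := by
    rw [Real.exp_le_exp, neg_mul, neg_div, neg_div, neg_le_neg_iff,
      div_le_div_iff₀ (by norm_num : (0:ℝ) < 8) (mul_pos two_pos (pow_pos hM 2)), hcard]
    have hsq : (c * a * ε) ^ 2 ≤ u ^ 2 := by
      exact pow_le_pow_left₀ (by positivity) hu1 2
    have key : 0 ≤ 8 * (nd:ℝ) * ((r:ℝ)^2) * (u^2 - (c*a*ε)^2) := by
      have : (0:ℝ) ≤ u^2 - (c*a*ε)^2 := by linarith
      positivity
    rw [hMdef, hεr]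
    nlinarith [key]
  -- measurability / integrability of complex exponentials
  have hcexpm : ∀ (d : Fin r × Fin r) (j : Fin nd), Measurable (fun ω' : Ω =>
      Complex.exp (Complex.I * ((qγ.1 * (b d j ω').1 + qγ.2 * (b d j ω').2 : ℝ) : ℂ))) := by
    intro d j
    exact Complex.measurable_exp.comp
      ((Complex.measurable_ofReal.comp (hθm (d, j))).const_mul Complex.I)
  have hcexpint : ∀ (d : Fin r × Fin r) (j : Fin nd), Integrable (fun ω' : Ω =>
      Complex.exp (Complex.I * ((qγ.1 * (b d j ω').1 + qγ.2 * (b d j ω').2 : ℝ) : ℂ))) := by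
    intro d j
    refine (integrable_const (1:ℝ)).mono' (hcexpm d j).aestronglyMeasurable ?_
    refine Filter.Eventually.of_forall fun ω' => ?_
    simp [Complex.norm_exp]
  set cR : ℝ := (r:ℝ)^2 * nd with hcR
  have hnd0 : (0:ℝ) < nd := by
    have : 0 < nd := hnd
    exact_mod_cast this
  have hcR0 : (0:ℝ) < cR := by rw [hcR]; exact mul_pos (pow_pos hrpos 2) hnd0
  have hco : ((r:ℂ)^2*(nd:ℂ)) = ((cR : ℝ) : ℂ) := by rw [hcR]; push_cast; ring
  -- real part formula
  have hRe : ∀ ω, (srBG r nd b qγ ω).re = cR⁻¹ * ∑ p : ι, (Y1 p ω - ∫ ω', Y1 p ω') := by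
    intro ω
    simp only [srBG]
    rw [hco, ← Complex.ofReal_inv, Complex.re_ofReal_mul]
    congr 1
    conv_rhs => rw [Fintype.sum_prod_type]
    rw [Complex.re_sum]
    refine Finset.sum_congr rfl fun d _ => ?_
    rw [Complex.re_sum]
    refine Finset.sum_congr rfl fun j _ => ?_
    rw [Complex.sub_re]
    congr 1
    · rw [mul_comm Complex.I, Complex.exp_ofReal_mul_I_re]
    · have h := (Complex.reCLM.integral_comp_comm (hcexpint d j)).symm
      simp only [Complex.reCLM_apply] at h
      rw [h]
      refine integral_congr_ae (Filter.Eventually.of_forall fun ω' => ?_)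
      show (Complex.exp (Complex.I *
        ((qγ.1 * (b d j ω').1 + qγ.2 * (b d j ω').2 : ℝ) : ℂ))).re = Y1 (d, j) ω'
      rw [mul_comm Complex.I, Complex.exp_ofReal_mul_I_re]
  -- imaginary part formula
  have hIm : ∀ ω, (srBG r nd b qγ ω).im = cR⁻¹ * ∑ p : ι, (Y3 p ω - ∫ ω', Y3 p ω') := by
    intro ω
    simp only [srBG]
    rw [hco, ← Complex.ofReal_inv, Complex.im_ofReal_mul]
    congr 1
    conv_rhs => rw [Fintype.sum_prod_type]
    rw [Complex.im_sum]
    refine Finset.sum_congr rfl fun d _ => ?_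
    rw [Complex.im_sum]
    refine Finset.sum_congr rfl fun j _ => ?_
    rw [Complex.sub_im]
    congr 1
    · rw [mul_comm Complex.I, Complex.exp_ofReal_mul_I_im]
    · have h := (Complex.imCLM.integral_comp_comm (hcexpint d j)).symm
      simp only [Complex.imCLM_apply] at h
      rw [h]
      refine integral_congr_ae (Filter.Eventually.of_forall fun ω' => ?_)
      show (Complex.exp (Complex.I *
        ((qγ.1 * (b d j ω').1 + qγ.2 * (b d j ω').2 : ℝ) : ℂ))).im = Y3 (d, j) ω'
      rw [mul_comm Complex.I, Complex.exp_ofReal_mul_I_im]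
  have hcardcR : (Fintype.card ι : ℝ) = cR := by rw [hcard, hcR]
  -- negated sums
  have hS2 : ∀ ω, ∑ i : ι, (Y2 i ω - ∫ ω', Y2 i ω')
      = -∑ i : ι, (Y1 i ω - ∫ ω', Y1 i ω') := by
    intro ω
    rw [← Finset.sum_neg_distrib]
    refine Finset.sum_congr rfl fun p _ => ?_
    simp only [hY2, hY1]
    rw [integral_neg]
    ring
  have hS4 : ∀ ω, ∑ i : ι, (Y4 i ω - ∫ ω', Y4 i ω')
      = -∑ i : ι, (Y3 i ω - ∫ ω', Y3 i ω') := by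
    intro ω
    rw [← Finset.sum_neg_distrib]
    refine Finset.sum_congr rfl fun p _ => ?_
    simp only [hY4, hY3]
    rw [integral_neg]
    ring
  -- event inclusion
  have hsub : {ω | Real.sqrt 2 * u ≤ ‖srBG r nd b qγ ω‖} ⊆
      ({ω | (Fintype.card ι : ℝ) * u ≤ ∑ i : ι, (Y1 i ω - ∫ ω', Y1 i ω')} ∪
       {ω | (Fintype.card ι : ℝ) * u ≤ ∑ i : ι, (Y2 i ω - ∫ ω', Y2 i ω')}) ∪
      ({ω | (Fintype.card ι : ℝ) * u ≤ ∑ i : ι, (Y3 i ω - ∫ ω', Y3 i ω')} ∪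
       {ω | (Fintype.card ι : ℝ) * u ≤ ∑ i : ι, (Y4 i ω - ∫ ω', Y4 i ω')}) := by
    intro ω hω
    simp only [Set.mem_setOf_eq] at hω
    have habs : 2 * u ^ 2 ≤ (srBG r nd b qγ ω).re ^ 2 + (srBG r nd b qγ ω).im ^ 2 := by
      have h0 : 0 ≤ Real.sqrt 2 * u := by positivity
      have h1 := pow_le_pow_left₀ h0 hω 2
      have h2 : (Real.sqrt 2 * u) ^ 2 = 2 * u ^ 2 := by
        rw [mul_pow, Real.sq_sqrt (by norm_num : (0:ℝ) ≤ 2)]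
      have h3 : (‖srBG r nd b qγ ω‖) ^ 2
          = (srBG r nd b qγ ω).re ^ 2 + (srBG r nd b qγ ω).im ^ 2 := by
        rw [Complex.sq_norm, Complex.normSq_apply]; ring
      rw [h2, h3] at h1
      exact h1
    obtain ⟨R, hRdef⟩ : ∃ R, (srBG r nd b qγ ω).re = R := ⟨_, rfl⟩
    obtain ⟨I, hIdef⟩ : ∃ I, (srBG r nd b qγ ω).im = I := ⟨_, rfl⟩
    rw [hRdef, hIdef] at habs
    have hcase := sr_four_cases u R I habs
    have hS1 : ∑ i : ι, (Y1 i ω - ∫ ω', Y1 i ω') = cR * R := by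
      have h := hRe ω
      rw [hRdef] at h
      rw [h, ← mul_assoc, mul_inv_cancel₀ hcR0.ne', one_mul]
    have hS3 : ∑ i : ι, (Y3 i ω - ∫ ω', Y3 i ω') = cR * I := by
      have h := hIm ω
      rw [hIdef] at h
      rw [h, ← mul_assoc, mul_inv_cancel₀ hcR0.ne', one_mul]
    rcases hcase with h | h | h | h
    · left; left
      simp only [Set.mem_setOf_eq]
      rw [hcardcR, hS1]
      exact mul_le_mul_of_nonneg_left h hcR0.le
    · left; right
      simp only [Set.mem_setOf_eq]
      rw [hcardcR, hS2, hS1]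
      have := mul_le_mul_of_nonneg_left h hcR0.le
      linarith [this]
    · right; left
      simp only [Set.mem_setOf_eq]
      rw [hcardcR, hS3]
      exact mul_le_mul_of_nonneg_left h hcR0.le
    · right; right
      simp only [Set.mem_setOf_eq]
      rw [hcardcR, hS4, hS3]
      have := mul_le_mul_of_nonneg_left h hcR0.le
      linarith [this]
  -- union bound and conclusion
  have hne : ∀ s : Set Ω, (ℙ : Measure Ω) s ≠ ⊤ := fun s => measure_ne_top _ _
  have hunion := (measure_mono (μ := (ℙ : Measure Ω)) hsub).trans
    ((measure_union_le (μ := (ℙ : Measure Ω)) _ _).trans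
      (add_le_add (measure_union_le (μ := (ℙ : Measure Ω)) _ _)
        (measure_union_le (μ := (ℙ : Measure Ω)) _ _)))
  have e1 := H1.trans hE0
  have e2 := H2.trans hE0
  have e3 := H3.trans hE0
  have e4 := H4.trans hE0
  calc (ℙ {ω | Real.sqrt 2 * u ≤ ‖srBG r nd b qγ ω‖}).toReal
      ≤ (((ℙ {ω | (Fintype.card ι : ℝ) * u ≤ ∑ i : ι, (Y1 i ω - ∫ ω', Y1 i ω')}
          + ℙ {ω | (Fintype.card ι : ℝ) * u ≤ ∑ i : ι, (Y2 i ω - ∫ ω', Y2 i ω')})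
          + (ℙ {ω | (Fintype.card ι : ℝ) * u ≤ ∑ i : ι, (Y3 i ω - ∫ ω', Y3 i ω')}
          + ℙ {ω | (Fintype.card ι : ℝ) * u ≤ ∑ i : ι, (Y4 i ω - ∫ ω', Y4 i ω')}))).toReal := by
        refine ENNReal.toReal_mono ?_ hunion
        exact ENNReal.add_ne_top.2 ⟨ENNReal.add_ne_top.2 ⟨hne _, hne _⟩,
          ENNReal.add_ne_top.2 ⟨hne _, hne _⟩⟩
    _ = (ℙ {ω | (Fintype.card ι : ℝ) * u ≤ ∑ i : ι, (Y1 i ω - ∫ ω', Y1 i ω')}).toReal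
        + (ℙ {ω | (Fintype.card ι : ℝ) * u ≤ ∑ i : ι, (Y2 i ω - ∫ ω', Y2 i ω')}).toReal
        + ((ℙ {ω | (Fintype.card ι : ℝ) * u ≤ ∑ i : ι, (Y3 i ω - ∫ ω', Y3 i ω')}).toReal
        + (ℙ {ω | (Fintype.card ι : ℝ) * u ≤ ∑ i : ι, (Y4 i ω - ∫ ω', Y4 i ω')}).toReal) := by
        rw [ENNReal.toReal_add (ENNReal.add_ne_top.2 ⟨hne _, hne _⟩)
            (ENNReal.add_ne_top.2 ⟨hne _, hne _⟩),
          ENNReal.toReal_add (hne _) (hne _), ENNReal.toReal_add (hne _) (hne _)]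
    _ ≤ 4 * Real.exp (-(c ^ 2 * nd) / 8) := by linarith
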